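/- Let x ∈ (−2,2) and (y,z) ∈ ℝ² with (y,z) ≠ (0,0). If there exists an integer n ≥ 1 such that the n-th iterate of τ_X fixes (x,y,z), i.e. τ_X^n(x,y,z) = (x,y,z), then arccos(x/2) is a rational multiple of π. -/

import Mathlib

/-- The Dehn twist `τ_X(x,y,z) = (x, z, xz − y)`. -/
def tauX (p : ℝ × ℝ × ℝ) : ℝ × ℝ × ℝ := (p.1, p.2.2, p.1 * p.2.2 - p.2.1)

/-- The linear recurrence underlying `tauX`. -/
def seqF (x y z : ℝ) : ℕ → ℝ
  | 0 => y
  | 1 => z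
  | (k+2) => x * seqF x y z (k+1) - seqF x y z k

lemma tauX_iter_eq (x y z : ℝ) :
    ∀ k, tauX^[k] (x, y, z) = (x, seqF x y z k, seqF x y z (k+1)) := by
  intro k
  induction k with
  | zero => simp [seqF]
  | succ k ih =>
      rw [Function.iterate_succ_apply', ih]
      simp [tauX, seqF]

/-- If some positive iterate of `τ_X` fixes a point `(x,y,z)` with `−2 < x < 2` and
`(y,z) ≠ (0,0)`, then `arccos(x/2)` is a rational multiple of `π`. -/
theorem periodic_implies_rational_angle (x y z : ℝ) (hx₁ : -2 < x) (hx₂ : x < 2)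
    (hyz : (y, z) ≠ ((0 : ℝ), (0 : ℝ)))
    (n : ℕ) (hn : 1 ≤ n) (hfix : tauX^[n] (x, y, z) = (x, y, z)) :
    ∃ q : ℚ, Real.arccos (x / 2) = q * Real.pi := by
  set θ := Real.arccos (x / 2) with hθdef
  have hcos : Real.cos θ = x / 2 := Real.cos_arccos (by linarith) (by linarith)
  have hθpos : 0 < θ := Real.arccos_pos.mpr (by linarith)
  have hθlt : θ < Real.pi := lt_of_le_of_ne (Real.arccos_le_pi _) (by
    intro h
    have := Real.arccos_eq_pi.mp h
    linarith)
  have hsin : Real.sin θ ≠ 0 := ne_of_gt (Real.sin_pos_of_pos_of_lt_pi hθpos hθlt)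
  set l : ℂ := Complex.exp (θ * Complex.I) with hldef
  have hl : l = (Real.cos θ : ℂ) + (Real.sin θ : ℂ) * Complex.I := by
    rw [hldef, Complex.exp_mul_I, Complex.ofReal_cos, Complex.ofReal_sin]
  have hconj : (starRingEnd ℂ) l = (Real.cos θ : ℂ) - (Real.sin θ : ℂ) * Complex.I := by
    rw [hl]
    simp only [map_add, map_mul, Complex.conj_ofReal, Complex.conj_I]
    ring
  have hsum : l + (starRingEnd ℂ) l = (x : ℂ) := by
    rw [hconj, hl, hcos]
    push_cast
    ring
  have hprod : l * (starRingEnd ℂ) l = 1 := by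
    rw [hconj, hl]
    have h1 : (Real.sin θ : ℂ)^2 + (Real.cos θ : ℂ)^2 = 1 := by
      exact_mod_cast congrArg (fun t : ℝ => (t : ℂ)) (Real.sin_sq_add_cos_sq θ)
    have hI : (Complex.I)^2 = -1 := Complex.I_sq
    linear_combination h1 - (Real.sin θ : ℂ)^2 * hI
  have hdiff : l - (starRingEnd ℂ) l ≠ 0 := by
    have heq : l - (starRingEnd ℂ) l = (2 * Real.sin θ : ℝ) * Complex.I := by
      rw [hconj, hl]; push_cast; ring
    rw [heq]
    intro h
    rcases mul_eq_zero.mp h with h' | h'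
    · exact hsin (by exact_mod_cast (by push_cast at h'; linarith [Complex.ofReal_eq_zero.mp (by push_cast; exact h' : ((2 * Real.sin θ : ℝ) : ℂ) = 0)] : Real.sin θ = 0))
    · exact Complex.I_ne_zero h'
  have hquad : l ^ 2 = (x : ℂ) * l - 1 := by
    linear_combination l * hsum - hprod
  have hquad' : ((starRingEnd ℂ) l) ^ 2 = (x : ℂ) * (starRingEnd ℂ) l - 1 := by
    linear_combination (starRingEnd ℂ) l * hsum - hprod
  set c : ℂ := ((z : ℂ) - (starRingEnd ℂ) l * (y : ℂ)) / (l - (starRingEnd ℂ) l) with hcdef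
  have hcconj : (starRingEnd ℂ) c = (l * (y : ℂ) - (z : ℂ)) / (l - (starRingEnd ℂ) l) := by
    rw [hcdef, map_div₀, map_sub, map_sub, map_mul]
    simp only [Complex.conj_conj, Complex.conj_ofReal]
    rw [div_eq_div_iff]
    · ring
    · intro h
      apply hdiff
      linear_combination -h
    · exact hdiff
  have hc0 : c + (starRingEnd ℂ) c = (y : ℂ) := by
    rw [hcdef, hcconj, ← add_div, div_eq_iff hdiff]
    ring
  have hc1 : c * l + (starRingEnd ℂ) c * (starRingEnd ℂ) l = (z : ℂ) := by
    rw [hcdef, hcconj, div_mul_eq_mul_div, div_mul_eq_mul_div, ← add_div,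
      div_eq_iff hdiff]
    ring
  have key : ∀ k, ((seqF x y z k : ℝ) : ℂ) = c * l ^ k + (starRingEnd ℂ) c * ((starRingEnd ℂ) l) ^ k := by
    intro k
    induction k using Nat.twoStepInduction with
    | zero => simpa [seqF] using hc0.symm
    | one => simpa [seqF] using hc1.symm
    | more k ih1 ih2 =>
        show ((seqF x y z (k+2) : ℝ) : ℂ) = _
        rw [seqF]
        push_cast
        rw [ih1, ih2]
        linear_combination (-(c * l ^ k)) * hquad + (-((starRingEnd ℂ) c * ((starRingEnd ℂ) l) ^ k)) * hquad'
  have hiter := tauX_iter_eq x y z n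
  rw [hfix] at hiter
  have h1 : seqF x y z n = y := by
    have := congrArg (fun p : ℝ × ℝ × ℝ => p.2.1) hiter
    simpa using this.symm
  have h2 : seqF x y z (n+1) = z := by
    have := congrArg (fun p : ℝ × ℝ × ℝ => p.2.2) hiter
    simpa using this.symm
  have E1 : c * l ^ n + (starRingEnd ℂ) c * ((starRingEnd ℂ) l) ^ n = c + (starRingEnd ℂ) c := by
    have := key n
    rw [h1] at this
    rw [← this, hc0]
  have E2 : c * l ^ (n+1) + (starRingEnd ℂ) c * ((starRingEnd ℂ) l) ^ (n+1)
      = c * l + (starRingEnd ℂ) c * (starRingEnd ℂ) l := by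
    have := key (n+1)
    rw [h2] at this
    rw [← this, hc1]
  have h3 : c * (l ^ n - 1) * (l - (starRingEnd ℂ) l) = 0 := by
    linear_combination E2 - (starRingEnd ℂ) l * E1
  have hA : c * (l ^ n - 1) = 0 := by
    rcases mul_eq_zero.mp h3 with h | h
    · exact h
    · exact absurd h hdiff
  have hcne : c ≠ 0 := by
    intro h
    apply hyz
    have hcc : (starRingEnd ℂ) c = 0 := by rw [h]; simp
    have hy : (y : ℂ) = 0 := by rw [← hc0, h]; simp
    have hz : (z : ℂ) = 0 := by rw [← hc1, h]; simp
    have : y = 0 := by exact_mod_cast hy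
    have : z = 0 := by exact_mod_cast hz
    simp_all
  have hln : l ^ n = 1 := by
    rcases mul_eq_zero.mp hA with h | h
    · exact absurd h hcne
    · exact sub_eq_zero.mp h
  have hexp : Complex.exp ((n : ℂ) * ((θ : ℂ) * Complex.I)) = 1 := by
    rw [Complex.exp_nat_mul, ← hldef, hln]
  obtain ⟨k, hk⟩ := Complex.exp_eq_one_iff.mp hexp
  have hreal : (n : ℝ) * θ = k * (2 * Real.pi) := by
    have hI : ((n : ℂ) * (θ : ℂ)) * Complex.I = ((k : ℂ) * (2 * (Real.pi : ℂ))) * Complex.I := by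
      rw [mul_assoc] at hk ⊢
      rw [hk]
      ring
    have := mul_right_cancel₀ Complex.I_ne_zero hI
    exact_mod_cast this
  refine ⟨(2 * k : ℚ) / n, ?_⟩
  have hn0 : (n : ℝ) ≠ 0 := by positivity
  have hq : ((2 * k : ℚ) / n : ℚ) = (2 * (k : ℝ)) / (n : ℝ) := by push_cast; ring
  rw [hq]
  field_simp
  linarith [hreal]
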